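/- Let a, b, c be pairwise distinct letters and L = {[a]}*·{[b]}·{[c]}*. Then (L, {[c]}*) is a maximal local typing for the design (L, f₁ f₂): (i) L·{[c]}* = L; and (ii) if X, Y are languages with X·Y ⊆ L, L ⊆ X, and {[c]}* ⊆ Y, then X = L and Y = {[c]}*. -/

import Mathlib

open Computability

lemma mem_kstar_single {α : Type} (c : α) (w : List α) :
    w ∈ ({[c]} : Language α)∗ ↔ ∀ x ∈ w, x = c := by
  rw [Language.mem_kstar]
  constructor
  · rintro ⟨L, rfl, hL⟩ x hx
    obtain ⟨l, hl, hxl⟩ := List.mem_flatten.1 hx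
    have := hL l hl
    change l = [c] at this
    subst this
    simpa using hxl
  · intro h
    refine ⟨List.replicate w.length [c], ?_, ?_⟩
    · have hj : ∀ n : ℕ, (List.replicate n [c]).flatten = List.replicate n c := by
        intro n; induction n with
        | zero => rfl
        | succ k ih => simp [List.replicate_succ, ih]
      rw [hj]
      exact (List.eq_replicate_iff.2 ⟨rfl, h⟩)
    · intro y hy
      rw [List.mem_replicate] at hy
      exact hy.2 ▸ rfl

theorem maximal_local_typing_L_cstar {α : Type} (a b c : α)
    (hab : a ≠ b) (hac : a ≠ c) (hbc : b ≠ c) :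
    (({[a]} : Language α)∗ * ({[b]} : Language α) * ({[c]} : Language α)∗) *
        ({[c]} : Language α)∗ =
      ({[a]} : Language α)∗ * ({[b]} : Language α) * ({[c]} : Language α)∗ ∧
    (∀ X Y : Language α,
      X * Y ≤ ({[a]} : Language α)∗ * ({[b]} : Language α) * ({[c]} : Language α)∗ →
      ({[a]} : Language α)∗ * ({[b]} : Language α) * ({[c]} : Language α)∗ ≤ X →
      ({[c]} : Language α)∗ ≤ Y →
      X = ({[a]} : Language α)∗ * ({[b]} : Language α) * ({[c]} : Language α)∗ ∧
      Y = ({[c]} : Language α)∗) := by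
  constructor
  · rw [mul_assoc, mul_assoc, kstar_mul_kstar, ← mul_assoc]
  · intro X Y h1 h2 h3
    have hnilY : ([] : List α) ∈ Y := h3 (Language.nil_mem_kstar _)
    have hX : X = ({[a]} : Language α)∗ * ({[b]} : Language α) * ({[c]} : Language α)∗ := by
      apply le_antisymm _ h2
      intro x hx
      have : x ∈ X * Y := Language.mem_mul.2 ⟨x, hx, [], hnilY, List.append_nil x⟩
      exact h1 this
    refine ⟨hX, le_antisymm ?_ h3⟩
    intro y hy
    have hbL : [b] ∈ ({[a]} : Language α)∗ * ({[b]} : Language α) * ({[c]} : Language α)∗ := by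
      refine Language.mem_mul.2 ⟨[b], Language.mem_mul.2 ⟨[], Language.nil_mem_kstar _, [b], rfl, rfl⟩,
        [], Language.nil_mem_kstar _, List.append_nil _⟩
    have hmem : [b] ++ y ∈ X * Y := Language.append_mem_mul (hX ▸ hbL) hy
    have := h1 hmem
    obtain ⟨p, hp, q, hq, hpq⟩ := Language.mem_mul.1 this
    obtain ⟨u, hu, s, hs, hus⟩ := Language.mem_mul.1 hp
    change s = [b] at hs
    subst hs
    subst hus
    cases u with
    | nil =>
      simp only [List.nil_append, List.cons_append, List.nil_append] at hpq
      have : q = y := by simpa using hpq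
      exact this ▸ hq
    | cons x u' =>
      exfalso
      have hxa : x = a := by
        have := (mem_kstar_single a (x :: u')).1 hu
        exact this x (List.mem_cons_self (a := x) (l := u'))
      have : x = b := by
        have : ((x :: u') ++ [b]) ++ q = [b] ++ y := hpq
        simpa using congrArg (fun l => l.head?) this
      exact hab (hxa ▸ this ▸ rfl)
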